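/- The symmetric (k+1)×(k+1) matrix Q with Q₀₀ = 0, Q₀ᵢ = Qᵢ₀ = 1 for 1 ≤ i ≤ k, Qᵢᵢ = pᵢ (where p₁,...,p_k are nonzero integers) and all other entries 0, is congruent over ℝ to the diagonal matrix diag(−ê, p₁, ..., p_k), where ê = Σᵢ 1/pᵢ. Consequently its signature equals s − sgn(ê), where s = Σᵢ sgn(pᵢ). -/

import Mathlib

open Matrix Finset Module

set_option linter.unusedSectionVars false

namespace Stmt18Aux

variable {n : Type*} [Fintype n] [DecidableEq n]

noncomputable def qv (w : n → ℝ) (x : n → ℝ) : ℝ := ∑ i, w i * x i ^ 2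

lemma qv_eq (w : n → ℝ) (x : n → ℝ) :
    x ⬝ᵥ (Matrix.diagonal w *ᵥ x) = qv w x := by
  simp only [qv, dotProduct, Matrix.mulVec_diagonal]
  exact Finset.sum_congr rfl fun i _ => by ring

def offSupp (S : Finset n) : Submodule ℝ (n → ℝ) where
  carrier := {x | ∀ j ∉ S, x j = 0}
  add_mem' := fun hx hy j hj => by simp [hx j hj, hy j hj]
  zero_mem' := fun j hj => rfl
  smul_mem' := fun c x hx j hj => by simp [hx j hj]

noncomputable def sdSpan (S : Finset n) : Submodule ℝ (n → ℝ) :=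
  Submodule.span ℝ (Set.range fun i : S => (Pi.single (i : n) (1:ℝ) : n → ℝ))

lemma finrank_sdSpan (S : Finset n) : finrank ℝ (sdSpan S) = S.card := by
  have h : LinearIndependent ℝ fun i : S => (Pi.single (i : n) (1:ℝ) : n → ℝ) := by
    have h2 := (Pi.basisFun ℝ n).linearIndependent.comp (Subtype.val : S → n)
      Subtype.val_injective
    convert h2 using 1
    funext i
    simp [Function.comp]
  rw [sdSpan, finrank_span_eq_card h, Fintype.card_coe]

lemma sdSpan_le (S : Finset n) : sdSpan S ≤ offSupp S := by
  rw [sdSpan, Submodule.span_le]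
  rintro _ ⟨i, rfl⟩ j hj
  have hne : j ≠ (i : n) := fun h => hj (h ▸ i.2)
  exact Pi.single_eq_of_ne hne 1

lemma mem_sdSpan_coord {S : Finset n} {x : n → ℝ} (hx : x ∈ sdSpan S) :
    ∀ j ∉ S, x j = 0 := sdSpan_le S hx

lemma qv_pos (w : n → ℝ) (x : n → ℝ)
    (hx : ∀ j, ¬ 0 < w j → x j = 0) (hx0 : x ≠ 0) : 0 < qv w x := by
  obtain ⟨j, hj⟩ := Function.ne_iff.mp hx0
  have hwj : 0 < w j := by by_contra h; exact hj (hx j h)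
  refine Finset.sum_pos' (fun i _ => ?_) ⟨j, Finset.mem_univ j, ?_⟩
  · by_cases h : 0 < w i
    · positivity
    · simp [hx i h]
  · have hx2 : 0 < x j ^ 2 := lt_of_le_of_ne (sq_nonneg _) (Ne.symm (pow_ne_zero 2 hj))
    exact mul_pos hwj hx2

lemma qv_nonpos (w : n → ℝ) (x : n → ℝ) (hx : ∀ j, 0 < w j → x j = 0) : qv w x ≤ 0 := by
  refine Finset.sum_nonpos fun i _ => ?_
  by_cases h : 0 < w i
  · simp [hx i h]
  · have h1 : w i ≤ 0 := le_of_not_gt h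
    have h2 : (0:ℝ) ≤ x i ^ 2 := sq_nonneg _
    nlinarith

lemma finrank_add_le (w : n → ℝ) (W Z : Submodule ℝ (n → ℝ))
    (hW : ∀ x ∈ W, x ≠ 0 → 0 < qv w x)
    (hZ : ∀ x ∈ Z, qv w x ≤ 0) :
    finrank ℝ W + finrank ℝ Z ≤ Fintype.card n := by
  have hdisj : W ⊓ Z = ⊥ := by
    rw [Submodule.eq_bot_iff]
    intro x hx
    by_contra h
    exact absurd (hW x hx.1 h) (not_lt.mpr (hZ x hx.2))
  have h1 := Submodule.finrank_sup_add_finrank_inf_eq W Z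
  rw [hdisj] at h1
  simp only [finrank_bot, add_zero] at h1
  calc finrank ℝ W + finrank ℝ Z = finrank ℝ ↥(W ⊔ Z) := h1.symm
    _ ≤ finrank ℝ (n → ℝ) := (W ⊔ Z).finrank_le
    _ = Fintype.card n := by simp [Module.finrank_pi]

lemma posCount_le (w w' : n → ℝ) (M : Matrix n n ℝ) (hM : IsUnit M.det)
    (h : Matrix.diagonal w' = Mᵀ * Matrix.diagonal w * M) :
    (univ.filter fun i => 0 < w' i).card ≤ (univ.filter fun i => 0 < w i).card := by
  have hinv : Invertible M := M.invertibleOfIsUnitDet hM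
  set e := M.toLinearEquiv' hinv with he_def
  have he : ∀ x, e x = M *ᵥ x := fun x => by
    simp [he_def, Matrix.toLinearEquiv', Matrix.toLin'_apply]
  have key : ∀ y, qv w' y = qv w (M *ᵥ y) := by
    intro y
    rw [← qv_eq w' y, ← qv_eq w (M *ᵥ y), h, ← Matrix.mulVec_mulVec, ← Matrix.mulVec_mulVec,
      Matrix.dotProduct_mulVec, Matrix.vecMul_transpose]
  set S' : Finset n := univ.filter fun i => 0 < w' i with hS'
  set S : Finset n := univ.filter fun i => 0 < w i with hS
  set T : Finset n := univ.filter fun i => ¬ 0 < w i with hT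
  set W : Submodule ℝ (n → ℝ) := (sdSpan S').map (e : (n → ℝ) →ₗ[ℝ] (n → ℝ)) with hW_def
  have hWrank : finrank ℝ W = S'.card := by
    rw [hW_def, LinearEquiv.finrank_map_eq, finrank_sdSpan]
  have hZrank : finrank ℝ (sdSpan T) = T.card := finrank_sdSpan T
  have hmain := finrank_add_le w W (sdSpan T) ?_ ?_
  · have hcompl : S.card + T.card = Fintype.card n := by
      rw [hS, hT, Finset.card_filter_add_card_filter_not, Finset.card_univ]
    have hSle : S.card ≤ Fintype.card n := by
      rw [← Finset.card_univ]; exact Finset.card_filter_le _ _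
    rw [hWrank, hZrank] at hmain
    omega
  · rintro x ⟨y, hy, rfl⟩ hx0
    have hy0 : y ≠ 0 := by
      rintro rfl; exact hx0 (map_zero _)
    have hcoord : ∀ j, ¬ 0 < w' j → y j = 0 := by
      intro j hj
      exact mem_sdSpan_coord hy j (by simp [hS', hj])
    have := qv_pos w' y hcoord hy0
    rw [key] at this
    have hxy : (e : (n → ℝ) →ₗ[ℝ] (n → ℝ)) y = M *ᵥ y := he y
    rwa [hxy]
  · intro x hx
    refine qv_nonpos w x fun j hj => ?_
    exact mem_sdSpan_coord hx j (by simp [hT, hj])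

lemma posCount_eq (w w' : n → ℝ) (M : Matrix n n ℝ) (hM : IsUnit M.det)
    (h : Matrix.diagonal w' = Mᵀ * Matrix.diagonal w * M) :
    (univ.filter fun i => 0 < w' i).card = (univ.filter fun i => 0 < w i).card := by
  refine le_antisymm (posCount_le w w' M hM h) (posCount_le w' w M⁻¹ (M.isUnit_nonsing_inv_det hM) ?_)
  have hMM : M * M⁻¹ = 1 := Matrix.mul_nonsing_inv M hM
  rw [h]
  simp only [Matrix.mul_assoc, hMM, Matrix.mul_one]
  rw [← Matrix.mul_assoc, ← Matrix.transpose_mul, hMM, Matrix.transpose_one, Matrix.one_mul]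

lemma negCount_eq (w w' : n → ℝ) (M : Matrix n n ℝ) (hM : IsUnit M.det)
    (h : Matrix.diagonal w' = Mᵀ * Matrix.diagonal w * M) :
    (univ.filter fun i => w' i < 0).card = (univ.filter fun i => w i < 0).card := by
  have hneg : ∀ v : n → ℝ, Matrix.diagonal (-v) = -Matrix.diagonal v := fun v => by
    ext i j
    by_cases hij : i = j <;> simp [hij]
  have h' : Matrix.diagonal (-w') = Mᵀ * Matrix.diagonal (-w) * M := by
    calc Matrix.diagonal (-w') = -Matrix.diagonal w' := hneg w'
      _ = -(Mᵀ * Matrix.diagonal w * M) := by rw [h]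
      _ = Mᵀ * -Matrix.diagonal w * M := by rw [← Matrix.neg_mul, ← Matrix.mul_neg]
      _ = Mᵀ * Matrix.diagonal (-w) * M := by rw [← hneg w]
  have := posCount_eq (-w) (-w') M hM h'
  simpa [neg_pos] using this

lemma eig_counts {A : Matrix n n ℝ} (hA : A.IsHermitian) (d : n → ℝ)
    (M : Matrix n n ℝ) (hM : IsUnit M.det) (h : Mᵀ * A * M = Matrix.diagonal d) :
    (univ.filter fun i => 0 < hA.eigenvalues i).card = (univ.filter fun i => 0 < d i).card ∧
    (univ.filter fun i => hA.eigenvalues i < 0).card = (univ.filter fun i => d i < 0).card := by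
  set U : Matrix n n ℝ := (hA.eigenvectorUnitary : Matrix n n ℝ) with hU_def
  have hUmem := (hA.eigenvectorUnitary).2
  have hU2 : U * star U = 1 := (Matrix.mem_unitaryGroup_iff).mp hUmem
  have hUt : star U = Uᵀ := by
    ext i j
    simp [Matrix.star_apply]
  have hspec : A = U * Matrix.diagonal hA.eigenvalues * Uᵀ := by
    have hsp := hA.spectral_theorem
    have hof : (RCLike.ofReal ∘ hA.eigenvalues : n → ℝ) = hA.eigenvalues := by
      funext i; simp
    rw [Unitary.conjStarAlgAut_apply, ← hU_def, hUt] at hsp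
    exact hsp
  have hUdet : IsUnit U.det := by
    have := congrArg Matrix.det hU2
    rw [Matrix.det_mul, Matrix.det_one] at this
    exact IsUnit.of_mul_eq_one _ this
  have hNdet : IsUnit (Uᵀ * M).det := by
    rw [Matrix.det_mul, Matrix.det_transpose]
    exact hUdet.mul hM
  have hcong : Matrix.diagonal d =
      (Uᵀ * M)ᵀ * Matrix.diagonal hA.eigenvalues * (Uᵀ * M) := by
    rw [Matrix.transpose_mul, Matrix.transpose_transpose, ← h]
    conv_lhs => rw [hspec]
    simp only [Matrix.mul_assoc]
  exact ⟨(posCount_eq hA.eigenvalues d (Uᵀ * M) hNdet hcong).symm,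
    (negCount_eq hA.eigenvalues d (Uᵀ * M) hNdet hcong).symm⟩

lemma countSub (f : n → ℝ) :
    ((univ.filter fun i => 0 < f i).card : ℤ) - ((univ.filter fun i => f i < 0).card : ℤ)
      = ∑ i, (if 0 < f i then (1:ℤ) else if f i < 0 then -1 else 0) := by
  have h : ∀ i, (if 0 < f i then (1:ℤ) else if f i < 0 then -1 else 0)
      = (if 0 < f i then (1:ℤ) else 0) - (if f i < 0 then (1:ℤ) else 0) := by
    intro i
    rcases lt_trichotomy (f i) 0 with h | h | h
    · simp [h, not_lt.mpr h.le]
    · simp [h]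
    · simp [h, not_lt.mpr h.le]
  rw [Finset.sum_congr rfl fun i _ => h i, Finset.sum_sub_distrib,
    Finset.sum_boole, Finset.sum_boole]

end Stmt18Aux

open Stmt18Aux

/-- The intersection matrix of the star-shaped plumbing graph `Γ₀`
(central vertex of weight 0 joined to `k` leaves of weights `p₁, …, p_k`)
is congruent over `ℝ` to `diag(-eHat, p₁, …, p_k)` where `eHat = Σ 1/pᵢ`;
consequently its signature equals `s - sgn(eHat)` where `s = Σ sgn(pᵢ)`. -/
theorem stmt_18 (k : ℕ) (p : Fin k → ℤ) (hp : ∀ i, p i ≠ 0)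
    (Q : Matrix (Unit ⊕ Fin k) (Unit ⊕ Fin k) ℝ)
    (hQ00 : ∀ u v : Unit, Q (Sum.inl u) (Sum.inl v) = 0)
    (hQ0i : ∀ (u : Unit) (i : Fin k), Q (Sum.inl u) (Sum.inr i) = 1)
    (hQi0 : ∀ (i : Fin k) (u : Unit), Q (Sum.inr i) (Sum.inl u) = 1)
    (hQij : ∀ i j : Fin k,
      Q (Sum.inr i) (Sum.inr j) = if i = j then (p i : ℝ) else 0)
    (eHat : ℝ) (heHat : eHat = ∑ i, (1 : ℝ) / (p i : ℝ))
    (s : ℤ) (hs : s = ∑ i, Int.sign (p i)) :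
    (∃ M : Matrix (Unit ⊕ Fin k) (Unit ⊕ Fin k) ℝ,
        IsUnit M.det ∧
        Mᵀ * Q * M =
          Matrix.diagonal (Sum.elim (fun _ => -eHat) fun i => (p i : ℝ))) ∧
    (eHat ≠ 0 →
      ∀ hH : Q.IsHermitian,
        ((Finset.univ.filter fun i => 0 < hH.eigenvalues i).card : ℤ)
          - ((Finset.univ.filter fun i => hH.eigenvalues i < 0).card : ℤ)
          = s - (if 0 < eHat then 1 else if eHat < 0 then -1 else 0)) := by
  have hpR : ∀ i, (p i : ℝ) ≠ 0 := fun i => Int.cast_ne_zero.mpr (hp i)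
  set d : (Unit ⊕ Fin k) → ℝ := Sum.elim (fun _ : Unit => -eHat) (fun i : Fin k => (p i : ℝ))
    with hd
  set C : Matrix (Fin k) Unit ℝ := Matrix.of fun i _ => -(1 / (p i : ℝ)) with hC
  set M₀ : Matrix (Unit ⊕ Fin k) (Unit ⊕ Fin k) ℝ := Matrix.fromBlocks 1 0 C 1 with hM₀
  have hdet : IsUnit M₀.det := by
    rw [hM₀, Matrix.det_fromBlocks_zero₁₂]
    simp
  have hcong : M₀ᵀ * Q * M₀ = Matrix.diagonal d := by
    have hQM : Q * Matrix.fromBlocks 1 0 C 1 =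
        Matrix.of (fun a b => Sum.elim
          (fun _ => Sum.elim (fun _ => -eHat) (fun j : Fin k => (1:ℝ)) b)
          (fun i : Fin k => Sum.elim (fun _ => (0:ℝ))
            (fun j : Fin k => if i = j then (p i : ℝ) else 0) b) a) := by
      ext a b
      rcases a with a | i <;> rcases b with b | j <;>
        simp [Matrix.mul_apply, Fintype.sum_sum_type, hQ00, hQ0i, hQi0, hQij, hC,
          Matrix.one_apply, heHat, Finset.sum_ite_eq, Finset.sum_ite_eq'] <;>
        first
        | rfl
        | (field_simp [hpR] <;> norm_num)
        | (rw [← Finset.sum_neg_distrib]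
           exact Finset.sum_congr rfl fun i _ => by field_simp [hpR])
        | skip
    rw [hM₀, Matrix.mul_assoc, hQM]
    ext a b
    rcases a with a | i <;> rcases b with b | j <;>
      simp [Matrix.mul_apply, Fintype.sum_sum_type, hC, Matrix.one_apply, hd,
        Matrix.diagonal, Finset.sum_ite_eq, Finset.sum_ite_eq']
    · field_simp [hpR]
      norm_num
    · by_cases h : i = j
      · subst h; simp
      · simp [h, Ne.symm h]
  refine ⟨⟨M₀, hdet, hcong⟩, ?_⟩
  intro he hH
  obtain ⟨hpos, hneg⟩ := eig_counts hH d M₀ hdet hcong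
  rw [hpos, hneg, countSub d, Fintype.sum_sum_type]
  have h1 : ∑ u : Unit, (if 0 < d (Sum.inl u) then (1:ℤ) else if d (Sum.inl u) < 0 then -1 else 0)
      = -(if 0 < eHat then 1 else if eHat < 0 then -1 else 0) := by
    have hdl : d (Sum.inl ()) = -eHat := rfl
    rcases lt_trichotomy eHat 0 with h | h | h
    · simp [hdl, h, neg_pos, not_lt.mpr h.le, asymm h]
    · exact absurd h he
    · simp [hdl, h, not_lt.mpr h.le, asymm h, neg_neg, neg_pos]
  have h2 : ∀ i : Fin k, (if 0 < d (Sum.inr i) then (1:ℤ) else if d (Sum.inr i) < 0 then -1 else 0)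
      = Int.sign (p i) := by
    intro i
    have hdr : d (Sum.inr i) = (p i : ℝ) := rfl
    rcases lt_trichotomy (p i) 0 with h | h | h
    · have hr : (p i : ℝ) < 0 := by exact_mod_cast h
      simp [hdr, hr, not_lt.mpr hr.le, Int.sign_eq_neg_one_of_neg h]
    · exact absurd h (hp i)
    · have hr : (0:ℝ) < (p i : ℝ) := by exact_mod_cast h
      simp [hdr, hr, Int.sign_eq_one_of_pos h]
  rw [h1, Finset.sum_congr rfl fun i _ => h2 i, ← hs]
  ring
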